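/- For α ∈ (1, 3/2) and any k with 1 ≤ k < M_α - 1, define E_k = { u ∈ {0,1}^k : T_{α,u}(1) = S_α^k(1) } and F_k = { u ∈ {0,1}^k : T_{α,u}(1-α) = S_α^k(1) }. Then F_k ⊆ E_k and E_k \ F_k = { b_1⋯b_k }, where b_n is the n-th signed binary digit of 1 under S_α (b_n = 1 if S_α^{n-1}(1) > 1/2, b_n = 0 if |S_α^{n-1}(1)| ≤ 1/2, b_n = -1 otherwise). -/
import Mathlib


/-- The symmetric doubling map `S_α`. -/
noncomputable def symDoubling (α : ℝ) (x : ℝ) : ℝ :=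
  if x < -(1/2) then 2*x + α else if x ≤ 1/2 then 2*x else 2*x - α

/-- The condition `1/2 < S_α^n(1) < α - 1/2`; `M_α = inf {n | matchCond α n} + 1`. -/
noncomputable def matchCond (α : ℝ) (n : ℕ) : Prop :=
  1/2 < (symDoubling α)^[n] 1 ∧ (symDoubling α)^[n] 1 < α - 1/2

/-- The two branches `T_{α,0}` (`j = false`) and `T_{α,1}` (`j = true`). -/
noncomputable def randSymDoubling (α : ℝ) (j : Bool) (x : ℝ) : ℝ :=
  match j with
  | false => if x ≤ (1-α)/2 then 2*x + α else if x ≤ 1/2 then 2*x else 2*x - α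
  | true  => if x < -(1/2) then 2*x + α else if x < (α-1)/2 then 2*x else 2*x - α

/-- `T_{α,u} = T_{α,u_k} ∘ ⋯ ∘ T_{α,u_1}`. -/
noncomputable def randSymDoublingWord (α : ℝ) (u : List Bool) (x : ℝ) : ℝ :=
  u.foldl (fun y j => randSymDoubling α j y) x

/-- The word `b_1 ⋯ b_k` of signed binary digits of `1` under `S_α` before matching,
interpreted in `{0,1}` via: symbol `1` (true) if `S_α^{n-1}(1) > 1/2`, symbol `0` (false)
otherwise (digits `-1` do not occur before matching). -/
noncomputable def digitWord (α : ℝ) (k : ℕ) : List Bool :=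
  (List.range k).map (fun n => decide ((1/2 : ℝ) < (symDoubling α)^[n] 1))

private lemma stmt8_bounds (α : ℝ) (hα : α ∈ Set.Ioo (1:ℝ) (3/2)) (k : ℕ)
    (hk : ∀ n ≤ k, ¬ matchCond α n) :
    ∀ n ≤ k, α - 1 ≤ (symDoubling α)^[n] 1 ∧ (symDoubling α)^[n] 1 ≤ 1 := by
  obtain ⟨hα1, hα2⟩ := hα
  intro n
  induction n with
  | zero => intro _; norm_num; linarith
  | succ n ih =>
    intro hn
    have hb := ih (by omega)
    have hm := hk n (by omega)
    rw [matchCond] at hm; push_neg at hm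
    rw [Function.iterate_succ_apply', symDoubling]
    split_ifs with h1 h2
    · constructor <;> linarith
    · constructor <;> linarith
    · have h3 := hm (by linarith)
      constructor <;> linarith

private lemma stmt8_key (α : ℝ) (hα : α ∈ Set.Ioo (1:ℝ) (3/2)) (k : ℕ)
    (hk : ∀ n ≤ k, ¬ matchCond α n) :
    ∀ n ≤ k,
      (randSymDoublingWord α (digitWord α n) 1 = (symDoubling α)^[n] 1 ∧
       randSymDoublingWord α (digitWord α n) (1-α) = (symDoubling α)^[n] 1 - α) ∧
      ∀ u : List Bool, u.length = n → u ≠ digitWord α n →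
        randSymDoublingWord α u 1 = randSymDoublingWord α u (1-α) := by
  have hα1 := hα.1
  have hα2 := hα.2
  have happ : ∀ (v : List Bool) (j : Bool) (x : ℝ),
      randSymDoublingWord α (v ++ [j]) x = randSymDoubling α j (randSymDoublingWord α v x) := by
    intro v j x; simp [randSymDoublingWord, List.foldl_append]
  intro n
  induction n with
  | zero =>
    intro _
    refine ⟨⟨by simp [digitWord, randSymDoublingWord], by simp [digitWord, randSymDoublingWord]⟩, ?_⟩
    intro u hu hne
    have : u = [] := List.length_eq_zero_iff.mp hu
    subst this
    simp [digitWord] at hne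
  | succ n ih =>
    intro hn
    have hnk : n ≤ k := by omega
    obtain ⟨⟨ib1, ib2⟩, iother⟩ := ih hnk
    set x := (symDoubling α)^[n] 1 with hx
    obtain ⟨hbl, hbu⟩ := stmt8_bounds α hα k hk n hnk
    have hm := hk n hnk
    rw [matchCond] at hm; push_neg at hm
    have hs : (symDoubling α)^[n+1] 1 = symDoubling α x := Function.iterate_succ_apply' _ _ _
    set d := decide ((1/2:ℝ) < x) with hd
    have hdw : digitWord α (n+1) = digitWord α n ++ [d] := by
      simp [digitWord, List.range_succ, hd, hx]
    rcases le_or_gt x (1/2) with h | h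
    · -- digit 0
      have hd' : d = false := by rw [hd, decide_eq_false_iff_not]; exact not_lt.mpr h
      have hsx : symDoubling α x = 2*x := by
        rw [symDoubling]; split_ifs <;> linarith
      have e1 : randSymDoubling α false x = 2*x := by
        simp only [randSymDoubling]; split_ifs <;> linarith
      have e2 : randSymDoubling α true x = 2*x - α := by
        simp only [randSymDoubling]; split_ifs <;> linarith
      have e3 : randSymDoubling α false (x - α) = 2*x - α := by
        simp only [randSymDoubling]; split_ifs <;> linarith
      have e4 : randSymDoubling α true (x - α) = 2*x - α := by
        simp only [randSymDoubling]; split_ifs <;> linarith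
      refine ⟨⟨?_, ?_⟩, ?_⟩
      · rw [hdw, happ, ib1, hd', e1, hs, hsx]
      · rw [hdw, happ, ib2, hd', e3, hs, hsx]
      · intro u hu hne
        obtain ⟨v, j, rfl⟩ : ∃ v j, u = v ++ [j] := by
          rcases u.eq_nil_or_concat with h0 | ⟨L, b, h0⟩
          · subst h0; simp at hu
          · exact ⟨L, b, by simpa using h0⟩
        have hv : v.length = n := by simpa using hu
        rw [happ, happ]
        rcases eq_or_ne v (digitWord α n) with hveq | hvne
        · subst hveq
          have hj : j ≠ d := fun hj => hne (by rw [hdw, hj])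
          have hj' : j = true := by cases j <;> simp_all
          rw [ib1, ib2, hj', e2, e4]
        · rw [iother v hv hvne]
    · -- digit 1
      have hd' : d = true := by rw [hd, decide_eq_true_iff]; exact h
      have hge : α - 1/2 ≤ x := hm h
      have hsx : symDoubling α x = 2*x - α := by
        rw [symDoubling]; split_ifs <;> linarith
      have e1 : randSymDoubling α false x = 2*x - α := by
        simp only [randSymDoubling]; split_ifs <;> linarith
      have e2 : randSymDoubling α true x = 2*x - α := by
        simp only [randSymDoubling]; split_ifs <;> linarith
      have e3 : randSymDoubling α false (x - α) = 2*x - α := by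
        simp only [randSymDoubling]; split_ifs <;> linarith
      have e4 : randSymDoubling α true (x - α) = 2*x - 2*α := by
        simp only [randSymDoubling]; split_ifs <;> linarith
      refine ⟨⟨?_, ?_⟩, ?_⟩
      · rw [hdw, happ, ib1, hd', e2, hs, hsx]
      · rw [hdw, happ, ib2, hd', e4, hs, hsx]
        ring
      · intro u hu hne
        obtain ⟨v, j, rfl⟩ : ∃ v j, u = v ++ [j] := by
          rcases u.eq_nil_or_concat with h0 | ⟨L, b, h0⟩
          · subst h0; simp at hu
          · exact ⟨L, b, by simpa using h0⟩
        have hv : v.length = n := by simpa using hu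
        rw [happ, happ]
        rcases eq_or_ne v (digitWord α n) with hveq | hvne
        · subst hveq
          have hj : j ≠ d := fun hj => hne (by rw [hdw, hj])
          have hj' : j = false := by cases j <;> simp_all
          rw [ib1, ib2, hj', e1, e3]
        · rw [iother v hv hvne]
/-- For `α ∈ (1,3/2)` and `1 ≤ k < M_α - 1` (encoded: no `n ≤ k` satisfies the matching
condition), with `E_k = {u ∈ {0,1}^k : T_{α,u}(1) = S_α^k(1)}` and
`F_k = {u ∈ {0,1}^k : T_{α,u}(1-α) = S_α^k(1)}`, one has `F_k ⊆ E_k` and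
`E_k \ F_k = {b_1⋯b_k}`. -/
theorem stmt8 (α : ℝ) (hα : α ∈ Set.Ioo (1:ℝ) (3/2)) (k : ℕ) (hk1 : 1 ≤ k)
    (hk : ∀ n ≤ k, ¬ matchCond α n) :
    ({u : List Bool | u.length = k ∧
        randSymDoublingWord α u (1-α) = (symDoubling α)^[k] 1} ⊆
      {u : List Bool | u.length = k ∧
        randSymDoublingWord α u 1 = (symDoubling α)^[k] 1}) ∧
    ({u : List Bool | u.length = k ∧
        randSymDoublingWord α u 1 = (symDoubling α)^[k] 1} \
      {u : List Bool | u.length = k ∧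
        randSymDoublingWord α u (1-α) = (symDoubling α)^[k] 1}
      = {digitWord α k}) := by

  obtain ⟨⟨hb1, hb2⟩, hother⟩ := stmt8_key α hα k hk k le_rfl
  have hlen : (digitWord α k).length = k := by simp [digitWord]
  have hane : (symDoubling α)^[k] 1 - α ≠ (symDoubling α)^[k] 1 := by
    have := hα.1; intro h; linarith
  constructor
  · rintro u ⟨hul, huF⟩
    refine ⟨hul, ?_⟩
    rcases eq_or_ne u (digitWord α k) with rfl | hne
    · rw [hb2] at huF; exact absurd huF hane
    · rw [hother u hul hne, huF]
  · ext u
    simp only [Set.mem_diff, Set.mem_setOf_eq, Set.mem_singleton_iff]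
    constructor
    · rintro ⟨⟨hul, huE⟩, hnF⟩
      by_contra hne
      exact hnF ⟨hul, by rw [← hother u hul hne, huE]⟩
    · rintro rfl
      refine ⟨⟨hlen, hb1⟩, ?_⟩
      rintro ⟨-, h2⟩
      rw [hb2] at h2
      exact hane h2
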